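/- For d ∈ {2,3} and every δ ∈ (0,1/2), the following two double integrals are finite: ∫∫_{(ℝ×ℝ^d)²} P(z) P(z') ρ(‖z‖) ρ(‖z'‖) ρ(‖z'−z‖) dz dz' < ∞ and ∫∫_{(ℝ×ℝ^d)²} P(z) P(z'−z) ρ(‖z‖) ρ(‖z'‖) ρ(‖z'−z‖) dz dz' < ∞. In particular, whenever a function κ₃ on (ℝ×ℝ^d)² satisfies |κ₃(z,z')| ≤ ρ(‖z‖) ρ(‖z'‖) ρ(‖z'−z‖), the constants ∫∫ P(z) P(z') κ₃(z,z') dz dz' and ∫∫ P(z) P(z'−z) κ₃(z,z') dz dz' converge absolutely. -/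

import Mathlib

open Real MeasureTheory Set
open scoped ENNReal

/-- Space-time `ℝ × ℝ^d`. -/
abbrev SpaceTime (d : ℕ) := ℝ × EuclideanSpace ℝ (Fin d)

/-- The parabolic norm `‖(t,x)‖ = (|x|⁴ + t²)^{1/4}`. -/
noncomputable def pnorm {d : ℕ} (z : SpaceTime d) : ℝ :=
  (‖z.2‖ ^ 4 + z.1 ^ 2) ^ ((1 : ℝ) / 4)

/-- The heat kernel on `ℝ × ℝ^d`. -/
noncomputable def heatP (d : ℕ) (z : SpaceTime d) : ℝ :=
  if 0 < z.1 then (4 * π * z.1) ^ (-(d : ℝ) / 2) * Real.exp (-‖z.2‖ ^ 2 / (4 * z.1))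
  else 0

/-- `ρ(r) = min (r^{-(1/2-δ)}) (r^{-((d+2)/2+δ)})`. -/
noncomputable def rhoF (d : ℕ) (δ r : ℝ) : ℝ :=
  min (r ^ (-(1 / 2 - δ))) (r ^ (-(((d : ℝ) + 2) / 2 + δ)))

namespace Stmt7

instance stRightInv (d : ℕ) : (volume : Measure (SpaceTime d)).IsAddRightInvariant := by
  have : ((volume : Measure ℝ).prod
      (volume : Measure (EuclideanSpace ℝ (Fin d)))).IsAddRightInvariant := inferInstance
  exact this

variable {d : ℕ} {δ : ℝ}

lemma pnorm_nonneg (z : SpaceTime d) : 0 ≤ pnorm z := Real.rpow_nonneg (by positivity) _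

lemma norm_le_pnorm (z : SpaceTime d) : ‖z.2‖ ≤ pnorm z := by
  have h1 : ‖z.2‖ = (‖z.2‖ ^ 4) ^ ((1:ℝ)/4) := by
    rw [← Real.rpow_natCast ‖z.2‖ 4, ← Real.rpow_mul (norm_nonneg _)]
    norm_num
  rw [h1, pnorm]
  exact Real.rpow_le_rpow (by positivity) (by nlinarith [sq_nonneg z.1]) (by norm_num)

lemma sqrt_abs_le_pnorm (z : SpaceTime d) : |z.1| ^ ((1:ℝ)/2) ≤ pnorm z := by
  have h1 : |z.1| ^ ((1:ℝ)/2) = (z.1 ^ 2) ^ ((1:ℝ)/4) := by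
    rw [← sq_abs, ← Real.rpow_natCast |z.1| 2, ← Real.rpow_mul (abs_nonneg _)]
    norm_num
  rw [h1, pnorm]
  exact Real.rpow_le_rpow (by positivity) (by nlinarith [pow_nonneg (norm_nonneg z.2) 4]) (by norm_num)

lemma heatP_nonneg (z : SpaceTime d) : 0 ≤ heatP d z := by
  rw [heatP]; split
  · positivity
  · exact le_refl 0

lemma rho_nonneg {r : ℝ} (hr : 0 ≤ r) : 0 ≤ rhoF d δ r :=
  le_min (Real.rpow_nonneg hr _) (Real.rpow_nonneg hr _)

lemma rho_anti (hδ1 : 0 < δ) (hδ2 : δ < 1/2) {r s : ℝ} (h0 : 0 < r) (hrs : r ≤ s) :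
    rhoF d δ s ≤ rhoF d δ r := by
  refine min_le_min (Real.rpow_le_rpow_of_nonpos h0 hrs (by linarith))
    (Real.rpow_le_rpow_of_nonpos h0 hrs ?_)
  have : (0:ℝ) ≤ (d:ℝ) := Nat.cast_nonneg d
  linarith

lemma rho_le_one (hδ1 : 0 < δ) (hδ2 : δ < 1/2) {r : ℝ} (hr : 1 ≤ r) : rhoF d δ r ≤ 1 :=
  (min_le_left _ _).trans (Real.rpow_le_one_of_one_le_of_nonpos hr (by linarith))

/-- time-slice bound for `rho ∘ pnorm` on `t > 0`. -/
lemma rho_pnorm_le (hδ1 : 0 < δ) (hδ2 : δ < 1/2) (z : SpaceTime d) (ht : 0 < z.1) :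
    rhoF d δ (pnorm z) ≤
      min (z.1 ^ (-((1/2 - δ)/2))) (z.1 ^ (-((((d:ℝ)+2)/2 + δ)/2))) := by
  have hd0 : (0:ℝ) ≤ (d:ℝ) := Nat.cast_nonneg d
  have hs : z.1 ^ ((1:ℝ)/2) ≤ pnorm z := by
    have := sqrt_abs_le_pnorm z; rwa [abs_of_pos ht] at this
  have hsp : 0 < z.1 ^ ((1:ℝ)/2) := Real.rpow_pos_of_pos ht _
  have key : ∀ c : ℝ, 0 ≤ c → pnorm z ^ (-c) ≤ z.1 ^ (-(c/2)) := by
    intro c hc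
    calc pnorm z ^ (-c) ≤ (z.1 ^ ((1:ℝ)/2)) ^ (-c) :=
          Real.rpow_le_rpow_of_nonpos hsp hs (by linarith)
      _ = z.1 ^ (-(c/2)) := by
          rw [← Real.rpow_mul ht.le]; ring_nf
  exact min_le_min (key _ (by linarith)) (key _ (by linarith))

lemma measurable_rpow_const (c : ℝ) : Measurable fun x : ℝ => x ^ c := by measurability

lemma measurable_pnorm : Measurable (pnorm (d := d)) :=
  (measurable_rpow_const _).comp
    (((measurable_snd.norm.pow measurable_const)).add (measurable_fst.pow measurable_const))

lemma measurable_rho : Measurable fun z : SpaceTime d => rhoF d δ (pnorm z) :=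
  ((measurable_rpow_const _).comp measurable_pnorm).min
    ((measurable_rpow_const _).comp measurable_pnorm)

lemma measurable_heatP : Measurable (heatP d) := by
  unfold heatP
  refine Measurable.ite (measurableSet_lt measurable_const measurable_fst) ?_ measurable_const
  exact ((measurable_rpow_const _).comp (measurable_const.mul measurable_fst)).mul
    ((measurable_snd.norm.pow measurable_const).neg.div
      (measurable_const.mul measurable_fst)).exp

/-- `F = P · ρ∘pnorm` as an `ℝ≥0∞`-valued function. -/
noncomputable def F (d : ℕ) (δ : ℝ) (z : SpaceTime d) : ℝ≥0∞ :=
  ENNReal.ofReal (heatP d z * rhoF d δ (pnorm z))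

/-- local part of `ρ∘pnorm`. -/
noncomputable def K1 (d : ℕ) (δ : ℝ) (z : SpaceTime d) : ℝ≥0∞ :=
  if pnorm z ≤ 1 then ENNReal.ofReal (rhoF d δ (pnorm z)) else 0

lemma measurable_F : Measurable (F d δ) :=
  (measurable_heatP.mul measurable_rho).ennreal_ofReal

lemma measurable_K1 : Measurable (K1 d δ) := by
  unfold K1
  exact Measurable.ite (measurableSet_le measurable_pnorm measurable_const)
    measurable_rho.ennreal_ofReal measurable_const

lemma lint_lt_top_of_integrableOn {α : Type*} [MeasurableSpace α] {μ : Measure α}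
    {f : α → ℝ} {s : Set α} (hf : IntegrableOn f s μ) :
    ∫⁻ x in s, ENNReal.ofReal (f x) ∂μ < ⊤ := by
  refine lt_of_le_of_lt (lintegral_mono fun x => ?_) hf.2
  rw [← ofReal_norm, Real.norm_eq_abs]
  exact ENNReal.ofReal_le_ofReal (le_abs_self _)

lemma min_rpow {a b e : ℝ} (ha : 0 ≤ a) (hb : 0 ≤ b) (he : 0 ≤ e) :
    min a b ^ e = min (a ^ e) (b ^ e) := by
  rcases le_total a b with h | h
  · rw [min_eq_left h, min_eq_left (Real.rpow_le_rpow ha h he)]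
  · rw [min_eq_right h, min_eq_right (Real.rpow_le_rpow hb h he)]

lemma lint_time {p q : ℝ} (hp : p < 1) (hq : 1 < q) :
    ∫⁻ t in Ioi (0:ℝ), ENNReal.ofReal (min (t ^ (-p)) (t ^ (-q))) < ⊤ := by
  rw [← Ioo_union_Ici_eq_Ioi (zero_lt_one (α := ℝ)),
    lintegral_union measurableSet_Ici (by rw [Set.disjoint_left]; intro a ha h; exact absurd h (not_le.2 ha.2))]
  refine ENNReal.add_lt_top.2 ⟨?_, ?_⟩
  · refine lt_of_le_of_lt (lintegral_mono fun t =>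
      ENNReal.ofReal_le_ofReal (min_le_left _ _)) ?_
    exact lint_lt_top_of_integrableOn
      ((intervalIntegral.integrableOn_Ioo_rpow_iff zero_lt_one).2 (by linarith))
  · refine lt_of_le_of_lt (lintegral_mono fun t =>
      ENNReal.ofReal_le_ofReal (min_le_right _ _)) ?_
    have hsub : Ici (1:ℝ) ⊆ Ioi (2⁻¹ : ℝ) := fun x hx =>
      lt_of_lt_of_le (by norm_num : (2:ℝ)⁻¹ < 1) hx
    refine lt_of_le_of_lt (lintegral_mono_set hsub) ?_
    exact lint_lt_top_of_integrableOn
      ((integrableOn_Ioi_rpow_iff (by norm_num : (0:ℝ) < 2⁻¹)).2 (by linarith))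

lemma integrable_gauss {c : ℝ} (hc : 0 < c) :
    Integrable fun x : EuclideanSpace ℝ (Fin d) => rexp (-c * ‖x‖^2) := by
  have h := GaussianFourier.integrable_cexp_neg_mul_sq_norm_add
    (V := EuclideanSpace ℝ (Fin d)) (b := (c:ℂ)) (by simpa using hc) 0 0
  have h2 := h.norm
  refine h2.congr (Filter.Eventually.of_forall fun x => ?_)
  simp [Complex.norm_exp, ← Complex.ofReal_pow]

lemma lint_gauss {c : ℝ} (hc : 0 < c) :
    ∫⁻ x : EuclideanSpace ℝ (Fin d), ENNReal.ofReal (rexp (-c * ‖x‖^2))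
      = ENNReal.ofReal ((π / c) ^ ((d:ℝ)/2)) := by
  rw [← ofReal_integral_eq_lintegral_ofReal (integrable_gauss hc)
    (Filter.Eventually.of_forall fun x => (Real.exp_pos _).le)]
  rw [GaussianFourier.integral_rexp_neg_mul_sq_norm hc]
  norm_num

lemma rpow_min_helper {t : ℝ} (ht : 0 < t) (s u v : ℝ) :
    t ^ s * min (t ^ u) (t ^ v) = min (t ^ (s+u)) (t ^ (s+v)) := by
  rw [mul_min_of_nonneg _ _ (Real.rpow_nonneg ht.le s), ← Real.rpow_add ht, ← Real.rpow_add ht]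

lemma lint_F_pow (hδ1 : 0 < δ) (hδ2 : δ < 1/2) {e : ℝ} (he : 1 ≤ e)
    (hp : (d:ℝ)/2*(e-1) + e*((1/2-δ)/2) < 1)
    (hq : 1 < (d:ℝ)/2*(e-1) + e*((((d:ℝ)+2)/2+δ)/2)) :
    ∫⁻ z : SpaceTime d, F d δ z ^ e < ⊤ := by
  have he0 : (0:ℝ) < e := lt_of_lt_of_le one_pos he
  set c1 : ℝ := 1/2 - δ with hc1
  set c2 : ℝ := ((d:ℝ)+2)/2 + δ with hc2
  set p : ℝ := (d:ℝ)/2*(e-1) + e*(c1/2) with hpdef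
  set q : ℝ := (d:ℝ)/2*(e-1) + e*(c2/2) with hqdef
  set g : ℝ → ℝ := fun t => (4*π*t) ^ (-(d:ℝ)/2*e) *
    min (t ^ (-(e*(c1/2)))) (t ^ (-(e*(c2/2)))) with hg
  set H : SpaceTime d → ℝ≥0∞ := fun z =>
    if 0 < z.1 then ENNReal.ofReal (g z.1 * rexp (-(e/(4*z.1)) * ‖z.2‖^2)) else 0 with hH
  have hgnn : ∀ t : ℝ, 0 < t → 0 ≤ g t := fun t ht => by
    rw [hg]
    exact mul_nonneg (Real.rpow_nonneg (by positivity) _)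
      (le_min (Real.rpow_nonneg ht.le _) (Real.rpow_nonneg ht.le _))
  -- pointwise bound
  have hpt : ∀ z : SpaceTime d, F d δ z ^ e ≤ H z := by
    intro z
    by_cases ht : 0 < z.1
    · have hrho : 0 ≤ rhoF d δ (pnorm z) := rho_nonneg (pnorm_nonneg z)
      have hP : heatP d z = (4*π*z.1) ^ (-(d:ℝ)/2) * rexp (-‖z.2‖^2 / (4*z.1)) := if_pos ht
      have hb : (0:ℝ) < 4*π*z.1 := by positivity
      rw [hH]
      simp only [if_pos ht]
      rw [F, ENNReal.ofReal_rpow_of_nonneg (mul_nonneg (heatP_nonneg z) hrho) he0.le]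
      refine ENNReal.ofReal_le_ofReal ?_
      have hrb := rho_pnorm_le hδ1 hδ2 z ht
      have hmn : (0:ℝ) ≤ min (z.1 ^ (-(c1/2))) (z.1 ^ (-(c2/2))) :=
        le_min (Real.rpow_nonneg ht.le _) (Real.rpow_nonneg ht.le _)
      calc (heatP d z * rhoF d δ (pnorm z)) ^ e
          ≤ ((4*π*z.1) ^ (-(d:ℝ)/2) * rexp (-‖z.2‖^2 / (4*z.1)) *
              (min (z.1 ^ (-(c1/2))) (z.1 ^ (-(c2/2))))) ^ e := by
            refine Real.rpow_le_rpow (mul_nonneg (heatP_nonneg z) hrho) ?_ he0.le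
            rw [hP]
            exact mul_le_mul_of_nonneg_left hrb (by positivity)
        _ = g z.1 * rexp (-(e/(4*z.1)) * ‖z.2‖^2) := by
            rw [Real.mul_rpow (by positivity) hmn,
                Real.mul_rpow (Real.rpow_nonneg hb.le _) (Real.exp_nonneg _)]
            rw [← Real.rpow_mul hb.le]
            rw [Real.rpow_def_of_pos (Real.exp_pos _), Real.log_exp]
            rw [min_rpow (Real.rpow_nonneg ht.le _) (Real.rpow_nonneg ht.le _) he0.le,
                ← Real.rpow_mul ht.le, ← Real.rpow_mul ht.le]
            rw [hg]
            ring_nf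
    · have h0 : heatP d z = 0 := if_neg ht
      rw [F, h0, zero_mul, ENNReal.ofReal_zero, ENNReal.zero_rpow_of_pos he0, hH]
      simp [if_neg ht]
  have hHm : Measurable H := by
    rw [hH]
    refine Measurable.ite (measurableSet_lt measurable_const measurable_fst) ?_ measurable_const
    refine Measurable.ennreal_ofReal (Measurable.mul ?_ ?_)
    · rw [hg]
      exact ((measurable_rpow_const _).comp (measurable_const.mul measurable_fst)).mul
        (((measurable_rpow_const _).comp measurable_fst).min
          ((measurable_rpow_const _).comp measurable_fst))
    · exact ((measurable_const.div (measurable_const.mul measurable_fst)).neg.mul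
        (measurable_snd.norm.pow measurable_const)).exp
  have hC0 : (0:ℝ) ≤ (4*π)^(-(d:ℝ)/2*e) * (4*π/e)^((d:ℝ)/2) := by positivity
  have hslice : ∀ t : ℝ, (∫⁻ x : EuclideanSpace ℝ (Fin d), H (t, x)) = (Ioi (0:ℝ)).indicator
      (fun t => ENNReal.ofReal ((4*π)^(-(d:ℝ)/2*e) * (4*π/e)^((d:ℝ)/2)
        * min (t ^ (-p)) (t ^ (-q)))) t := by
    intro t
    by_cases ht : 0 < t
    · rw [indicator_of_mem (show t ∈ Ioi (0:ℝ) from ht)]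
      have hc : 0 < e/(4*t) := by positivity
      have hx : ∀ x : EuclideanSpace ℝ (Fin d), H (t,x) =
          ENNReal.ofReal (g t) * ENNReal.ofReal (rexp (-(e/(4*t)) * ‖x‖^2)) := by
        intro x
        rw [hH]
        simp only [if_pos ht]
        rw [ENNReal.ofReal_mul (hgnn t ht)]
      simp_rw [hx]
      rw [lintegral_const_mul _
        (((measurable_norm.pow measurable_const).const_mul _).exp.ennreal_ofReal),
        lint_gauss hc, ← ENNReal.ofReal_mul (hgnn t ht)]
      congr 1
      have h4t : π / (e/(4*t)) = (4*π/e) * t := by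
        field_simp
      rw [h4t]
      simp only [hg]
      rw [Real.mul_rpow (by positivity : (0:ℝ) ≤ 4*π/e) ht.le]
      rw [Real.mul_rpow (by positivity : (0:ℝ) ≤ 4*π) ht.le]
      calc (4*π)^(-(d:ℝ)/2*e) * t^(-(d:ℝ)/2*e) * min (t ^ (-(e*(c1/2)))) (t ^ (-(e*(c2/2))))
            * ((4*π/e)^((d:ℝ)/2) * t^((d:ℝ)/2))
          = (4*π)^(-(d:ℝ)/2*e) * (4*π/e)^((d:ℝ)/2) *
            (t^((d:ℝ)/2) * t^(-(d:ℝ)/2*e) *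
              min (t ^ (-(e*(c1/2)))) (t ^ (-(e*(c2/2))))) := by ring
        _ = (4*π)^(-(d:ℝ)/2*e) * (4*π/e)^((d:ℝ)/2) *
            (t^((d:ℝ)/2 + -(d:ℝ)/2*e) *
              min (t ^ (-(e*(c1/2)))) (t ^ (-(e*(c2/2))))) := by
            rw [← Real.rpow_add ht]
        _ = (4*π)^(-(d:ℝ)/2*e) * (4*π/e)^((d:ℝ)/2) *
            min (t ^ ((d:ℝ)/2 + -(d:ℝ)/2*e + -(e*(c1/2)))) (t ^ ((d:ℝ)/2 + -(d:ℝ)/2*e + -(e*(c2/2)))) := by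
            rw [rpow_min_helper ht]
        _ = (4*π)^(-(d:ℝ)/2*e) * (4*π/e)^((d:ℝ)/2) * min (t ^ (-p)) (t ^ (-q)) := by
            rw [show (d:ℝ)/2 + -(d:ℝ)/2*e + -(e*(c1/2)) = -p by rw [hpdef]; ring,
              show (d:ℝ)/2 + -(d:ℝ)/2*e + -(e*(c2/2)) = -q by rw [hqdef]; ring]
    · rw [indicator_of_notMem (show t ∉ Ioi (0:ℝ) from ht)]
      have hx : ∀ x : EuclideanSpace ℝ (Fin d), H (t,x) = 0 := by
        intro x
        rw [hH]
        simp [if_neg ht]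
      simp_rw [hx]
      exact lintegral_zero
  calc ∫⁻ z : SpaceTime d, F d δ z ^ e ≤ ∫⁻ z, H z := lintegral_mono hpt
    _ = ∫⁻ t : ℝ, ∫⁻ x : EuclideanSpace ℝ (Fin d), H (t, x) := by
        rw [Measure.volume_eq_prod, lintegral_prod _ hHm.aemeasurable]
    _ = ∫⁻ t in Ioi (0:ℝ), ENNReal.ofReal ((4*π)^(-(d:ℝ)/2*e) * (4*π/e)^((d:ℝ)/2)
          * min (t ^ (-p)) (t ^ (-q))) := by
        rw [lintegral_congr hslice, lintegral_indicator measurableSet_Ioi]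
    _ < ⊤ := by
        simp_rw [ENNReal.ofReal_mul hC0]
        rw [lintegral_const_mul' _ _ ENNReal.ofReal_ne_top]
        exact ENNReal.mul_lt_top ENNReal.ofReal_lt_top (lint_time hp hq)

lemma volume_time_zero :
    (volume : Measure (SpaceTime d)) {z : SpaceTime d | z.1 = 0} = 0 := by
  have hs : {z : SpaceTime d | z.1 = 0}
      = ({0} : Set ℝ) ×ˢ (univ : Set (EuclideanSpace ℝ (Fin d))) := by
    ext z
    simp only [Set.mem_setOf_eq, Set.mem_prod, Set.mem_singleton_iff, Set.mem_univ, and_true]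
  rw [hs, Measure.volume_eq_prod, Measure.prod_prod]
  simp

lemma ae_time_ne_zero : ∀ᵐ z : SpaceTime d, z.1 ≠ 0 := by
  rw [ae_iff]
  have : {z : SpaceTime d | ¬ z.1 ≠ 0} = {z : SpaceTime d | z.1 = 0} := by
    ext z; simp
  rw [this]
  exact volume_time_zero

lemma lint_abs_pow {c : ℝ} (hc : -1 < c) :
    ∫⁻ t in Icc (-1:ℝ) 1, ENNReal.ofReal (|t| ^ c) < ⊤ := by
  have hmeas : Measurable fun t : ℝ => ENNReal.ofReal (|t| ^ c) :=
    ((measurable_rpow_const c).comp measurable_abs).ennreal_ofReal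
  have hpos : ∫⁻ t in Ioc (0:ℝ) 1, ENNReal.ofReal (|t| ^ c) < ⊤ := by
    rw [← Measure.restrict_congr_set Ioo_ae_eq_Ioc]
    refine lt_of_le_of_lt (le_of_eq (setLIntegral_congr_fun measurableSet_Ioo
      (fun t ht => by rw [abs_of_pos ht.1]))) ?_
    exact lint_lt_top_of_integrableOn
      ((intervalIntegral.integrableOn_Ioo_rpow_iff zero_lt_one).2 hc)
  have hneg : ∫⁻ t in Ico (-1:ℝ) 0, ENNReal.ofReal (|t| ^ c)
      = ∫⁻ t in Ioc (0:ℝ) 1, ENNReal.ofReal (|t| ^ c) := by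
    have hmp : MeasurePreserving (fun t : ℝ => -t) volume volume :=
      Measure.measurePreserving_neg _
    have key : ∀ t : ℝ, (Ico (-1:ℝ) 0).indicator
          (fun s => ENNReal.ofReal (|s| ^ c)) (-t)
        = (Ioc (0:ℝ) 1).indicator (fun s => ENNReal.ofReal (|s| ^ c)) t := by
      intro t
      by_cases h : t ∈ Ioc (0:ℝ) 1
      · rw [indicator_of_mem h, indicator_of_mem
          (show -t ∈ Ico (-1:ℝ) 0 from ⟨by linarith [h.2], by linarith [h.1]⟩), abs_neg]
      · rw [indicator_of_notMem h, indicator_of_notMem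
          (fun hm : -t ∈ Ico (-1:ℝ) 0 => h ⟨by linarith [hm.2], by linarith [hm.1]⟩)]
    calc ∫⁻ t in Ico (-1:ℝ) 0, ENNReal.ofReal (|t| ^ c)
        = ∫⁻ t, (Ico (-1:ℝ) 0).indicator (fun s => ENNReal.ofReal (|s| ^ c)) t := by
          rw [lintegral_indicator measurableSet_Ico]
      _ = ∫⁻ t, (Ico (-1:ℝ) 0).indicator (fun s => ENNReal.ofReal (|s| ^ c)) (-t) := by
          rw [hmp.lintegral_comp (hmeas.indicator measurableSet_Ico)]
      _ = ∫⁻ t, (Ioc (0:ℝ) 1).indicator (fun s => ENNReal.ofReal (|s| ^ c)) t :=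
          lintegral_congr key
      _ = ∫⁻ t in Ioc (0:ℝ) 1, ENNReal.ofReal (|t| ^ c) := by
          rw [lintegral_indicator measurableSet_Ioc]
  have hcover : Icc (-1:ℝ) 1 = Ico (-1:ℝ) 0 ∪ Icc (0:ℝ) 1 :=
    (Ico_union_Icc_eq_Icc (by norm_num) (by norm_num)).symm
  have hdisj : Disjoint (Ico (-1:ℝ) 0) (Icc (0:ℝ) 1) := by
    rw [Set.disjoint_left]
    intro a ha ha'
    exact absurd ha'.1 (not_le.2 ha.2)
  rw [hcover, lintegral_union measurableSet_Icc hdisj]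
  refine ENNReal.add_lt_top.2 ⟨?_, ?_⟩
  · rw [hneg]; exact hpos
  · rw [← Measure.restrict_congr_set Ioc_ae_eq_Icc]; exact hpos

lemma lint_K1 (hδ1 : 0 < δ) (hδ2 : δ < 1/2) :
    ∫⁻ z : SpaceTime d, K1 d δ z ^ (4:ℝ) < ⊤ := by
  set c : ℝ := 2*δ - 1 with hcdef
  have hc1 : -1 < c := by rw [hcdef]; linarith
  set f : ℝ → ℝ≥0∞ :=
    fun t => (Icc (-1:ℝ) 1).indicator (fun t => ENNReal.ofReal (|t| ^ c)) t with hf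
  set gB : EuclideanSpace ℝ (Fin d) → ℝ≥0∞ :=
    fun x => (Metric.closedBall (0:EuclideanSpace ℝ (Fin d)) 1).indicator 1 x with hgB
  have hbound : ∀ᵐ z : SpaceTime d, K1 d δ z ^ (4:ℝ) ≤ f z.1 * gB z.2 := by
    filter_upwards [ae_time_ne_zero] with z hz
    by_cases hp1 : pnorm z ≤ 1
    · have hsq : 0 < |z.1| ^ ((1:ℝ)/2) := Real.rpow_pos_of_pos (abs_pos.2 hz) _
      have hpn : 0 < pnorm z := lt_of_lt_of_le hsq (sqrt_abs_le_pnorm z)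
      have habs : |z.1| = (|z.1| ^ ((1:ℝ)/2)) ^ (2:ℕ) := by
        rw [← Real.rpow_natCast (|z.1| ^ ((1:ℝ)/2)) 2, ← Real.rpow_mul (abs_nonneg _)]
        norm_num
      have ht1 : |z.1| ≤ 1 := by
        have h2 : |z.1| ^ ((1:ℝ)/2) ≤ 1 := le_trans (sqrt_abs_le_pnorm z) hp1
        rw [habs]
        nlinarith [hsq.le]
      have hx1 : z.2 ∈ Metric.closedBall (0:EuclideanSpace ℝ (Fin d)) 1 :=
        mem_closedBall_zero_iff.2 (le_trans (norm_le_pnorm z) hp1)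
      have hrhon : 0 ≤ rhoF d δ (pnorm z) := rho_nonneg (pnorm_nonneg z)
      have hchain : rhoF d δ (pnorm z) ^ ((4:ℝ)) ≤ |z.1| ^ c := by
        have s1 : rhoF d δ (pnorm z) ≤ |z.1| ^ (((1:ℝ)/2) * (-(1/2 - δ))) := by
          refine le_trans (min_le_left _ _) ?_
          calc pnorm z ^ (-(1/2 - δ))
              ≤ (|z.1| ^ ((1:ℝ)/2)) ^ (-(1/2 - δ)) :=
                Real.rpow_le_rpow_of_nonpos hsq (sqrt_abs_le_pnorm z) (by linarith)
            _ = |z.1| ^ (((1:ℝ)/2) * (-(1/2 - δ))) := by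
                rw [← Real.rpow_mul (abs_nonneg _)]
        calc rhoF d δ (pnorm z) ^ ((4:ℝ))
            ≤ (|z.1| ^ (((1:ℝ)/2) * (-(1/2 - δ)))) ^ ((4:ℝ)) :=
              Real.rpow_le_rpow hrhon s1 (by norm_num)
          _ = |z.1| ^ c := by
              rw [← Real.rpow_mul (abs_nonneg _), hcdef]
              ring_nf
      rw [K1, if_pos hp1,
        ENNReal.ofReal_rpow_of_nonneg hrhon (by norm_num : (0:ℝ) ≤ 4)]
      rw [hf, hgB]
      simp only [indicator_of_mem (mem_Icc.2 (abs_le.1 ht1)), indicator_of_mem hx1,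
        Pi.one_apply, mul_one]
      exact ENNReal.ofReal_le_ofReal hchain
    · rw [K1, if_neg hp1, ENNReal.zero_rpow_of_pos (by norm_num)]
      exact zero_le
  have hfm : Measurable f := by
    rw [hf]
    exact (((measurable_rpow_const c).comp measurable_abs).ennreal_ofReal).indicator
      measurableSet_Icc
  have hgBm : Measurable gB := by
    rw [hgB]
    exact measurable_one.indicator Metric.isClosed_closedBall.measurableSet
  calc ∫⁻ z : SpaceTime d, K1 d δ z ^ (4:ℝ)
      ≤ ∫⁻ z : SpaceTime d, f z.1 * gB z.2 := lintegral_mono_ae hbound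
    _ = (∫⁻ t, f t) * ∫⁻ x, gB x := by
        rw [Measure.volume_eq_prod, lintegral_prod_mul hfm.aemeasurable hgBm.aemeasurable]
    _ < ⊤ := by
        refine ENNReal.mul_lt_top ?_ ?_
        · rw [hf, lintegral_indicator measurableSet_Icc]
          exact lint_abs_pow hc1
        · rw [hgB, lintegral_indicator_one Metric.isClosed_closedBall.measurableSet]
          exact measure_closedBall_lt_top

lemma holder_step (g h : SpaceTime d → ℝ≥0∞) (hg : AEMeasurable g) (hh : AEMeasurable h) :
    ∫⁻ z, g z * h z ≤ (∫⁻ z, g z ^ ((4:ℝ)/3)) ^ (1/((4:ℝ)/3))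
      * (∫⁻ z, h z ^ (4:ℝ)) ^ (1/(4:ℝ)) :=
  ENNReal.lintegral_mul_le_Lp_mul_Lq volume ⟨by norm_num, by norm_num, by norm_num⟩ hg hh

lemma J_lt_top (hδ1 : 0 < δ) (hδ2 : δ < 1/2) (hd2 : 2 ≤ (d:ℝ)) (hd3 : (d:ℝ) ≤ 3) :
    (∫⁻ q : SpaceTime d × SpaceTime d,
        F d δ q.1 * F d δ q.2 * ENNReal.ofReal (rhoF d δ (pnorm (q.2 - q.1)))) < ⊤ ∧
    (∫⁻ q : SpaceTime d × SpaceTime d,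
        F d δ q.1 * F d δ (q.2 - q.1) * ENNReal.ofReal (rhoF d δ (pnorm q.2))) < ⊤ := by
  have hL1 : ∫⁻ z, F d δ z < ⊤ := by
    have h := lint_F_pow (d:=d) hδ1 hδ2 (e := 1) le_rfl (by linarith) (by linarith)
    simpa using h
  have hL43 : ∫⁻ z, F d δ z ^ ((4:ℝ)/3) < ⊤ :=
    lint_F_pow hδ1 hδ2 (by norm_num) (by linarith) (by linarith)
  have hL4 := lint_K1 (d:=d) hδ1 hδ2
  set M : ℝ≥0∞ := (∫⁻ z, F d δ z ^ ((4:ℝ)/3)) ^ (1/((4:ℝ)/3))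
      * (∫⁻ z, K1 d δ z ^ (4:ℝ)) ^ (1/(4:ℝ)) with hM
  have hMne : M ≠ ⊤ := by
    rw [hM]
    exact (ENNReal.mul_lt_top (ENNReal.rpow_lt_top_of_nonneg (by norm_num) hL43.ne)
      (ENNReal.rpow_lt_top_of_nonneg (by norm_num) hL4.ne)).ne
  have hRK : ∀ w : SpaceTime d, ENNReal.ofReal (rhoF d δ (pnorm w)) ≤ K1 d δ w + 1 := by
    intro w
    by_cases h : pnorm w ≤ 1
    · rw [K1, if_pos h]; exact le_self_add
    · rw [K1, if_neg h, zero_add]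
      calc ENNReal.ofReal (rhoF d δ (pnorm w))
          ≤ ENNReal.ofReal 1 := ENNReal.ofReal_le_ofReal (rho_le_one hδ1 hδ2 (not_le.1 h).le)
        _ = 1 := ENNReal.ofReal_one
  have hFm := measurable_F (d := d) (δ := δ)
  have hKm := measurable_K1 (d := d) (δ := δ)
  have hFsq : ∫⁻ q : SpaceTime d × SpaceTime d, F d δ q.1 * F d δ q.2 < ⊤ := by
    rw [Measure.volume_eq_prod, lintegral_prod_mul hFm.aemeasurable hFm.aemeasurable]
    exact ENNReal.mul_lt_top hL1 hL1
  constructor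
  · have hmeas1 : Measurable fun q : SpaceTime d × SpaceTime d =>
        F d δ q.1 * (F d δ q.2 * K1 d δ (q.2 - q.1)) :=
      (hFm.comp measurable_fst).mul ((hFm.comp measurable_snd).mul
        (hKm.comp (measurable_snd.sub measurable_fst)))
    have step1 : ∀ q : SpaceTime d × SpaceTime d,
        F d δ q.1 * F d δ q.2 * ENNReal.ofReal (rhoF d δ (pnorm (q.2 - q.1)))
          ≤ F d δ q.1 * (F d δ q.2 * K1 d δ (q.2 - q.1)) + F d δ q.1 * F d δ q.2 := by
      intro q
      calc F d δ q.1 * F d δ q.2 * ENNReal.ofReal (rhoF d δ (pnorm (q.2 - q.1)))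
          ≤ F d δ q.1 * F d δ q.2 * (K1 d δ (q.2 - q.1) + 1) := mul_le_mul_right (hRK _) _
        _ = F d δ q.1 * (F d δ q.2 * K1 d δ (q.2 - q.1)) + F d δ q.1 * F d δ q.2 := by
            rw [mul_add, mul_one, mul_assoc]
    refine lt_of_le_of_lt (lintegral_mono step1) ?_
    rw [lintegral_add_left hmeas1]
    refine ENNReal.add_lt_top.2 ⟨?_, hFsq⟩
    have key : ∫⁻ q : SpaceTime d × SpaceTime d,
        F d δ q.1 * (F d δ q.2 * K1 d δ (q.2 - q.1)) < ⊤ := by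
      rw [Measure.volume_eq_prod, lintegral_prod _ hmeas1.aemeasurable]
      have inner_le : ∀ z : SpaceTime d,
          (∫⁻ z', F d δ z * (F d δ z' * K1 d δ (z' - z))) ≤ F d δ z * M := by
        intro z
        have hz1 : Measurable fun z' : SpaceTime d => F d δ z' * K1 d δ (z' - z) :=
          hFm.mul (hKm.comp (measurable_sub_const z))
        rw [lintegral_const_mul _ hz1]
        refine mul_le_mul_right ?_ _
        have htr : (∫⁻ z', K1 d δ (z' - z) ^ (4:ℝ)) = ∫⁻ w, K1 d δ w ^ (4:ℝ) := by
          have h := lintegral_sub_right_eq_self (μ := volume)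
            (fun w => K1 d δ w ^ (4:ℝ)) z
          simpa using h
        calc ∫⁻ z', F d δ z' * K1 d δ (z' - z)
            ≤ (∫⁻ z', F d δ z' ^ ((4:ℝ)/3)) ^ (1/((4:ℝ)/3))
              * (∫⁻ z', K1 d δ (z' - z) ^ (4:ℝ)) ^ (1/(4:ℝ)) :=
              holder_step _ _ hFm.aemeasurable
                ((hKm.comp (measurable_sub_const z)).aemeasurable)
          _ = M := by rw [htr, hM]
      calc ∫⁻ z, ∫⁻ z', F d δ z * (F d δ z' * K1 d δ (z' - z))
          ≤ ∫⁻ z, F d δ z * M := lintegral_mono inner_le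
        _ = (∫⁻ z, F d δ z) * M := lintegral_mul_const' M _ hMne
        _ < ⊤ := ENNReal.mul_lt_top hL1 (lt_top_iff_ne_top.2 hMne)
    exact key
  · have hmeas2 : Measurable fun q : SpaceTime d × SpaceTime d =>
        F d δ q.1 * (F d δ (q.2 - q.1) * K1 d δ q.2) :=
      (hFm.comp measurable_fst).mul ((hFm.comp (measurable_snd.sub measurable_fst)).mul
        (hKm.comp measurable_snd))
    have hFsq2 : ∫⁻ q : SpaceTime d × SpaceTime d, F d δ q.1 * F d δ (q.2 - q.1) < ⊤ := by
      have hmp := measurePreserving_prod_sub (volume : Measure (SpaceTime d)) volume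
      have hcomp := hmp.lintegral_comp
        (f := fun p : SpaceTime d × SpaceTime d => F d δ p.1 * F d δ p.2)
        ((hFm.comp measurable_fst).mul (hFm.comp measurable_snd))
      rw [Measure.volume_eq_prod]
      calc ∫⁻ q, F d δ q.1 * F d δ (q.2 - q.1)
            ∂((volume : Measure (SpaceTime d)).prod volume)
          = ∫⁻ p, F d δ p.1 * F d δ p.2
            ∂((volume : Measure (SpaceTime d)).prod volume) := by simpa using hcomp
        _ = (∫⁻ z, F d δ z) * ∫⁻ z, F d δ z :=
            lintegral_prod_mul hFm.aemeasurable hFm.aemeasurable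
        _ < ⊤ := ENNReal.mul_lt_top hL1 hL1
    have step2 : ∀ q : SpaceTime d × SpaceTime d,
        F d δ q.1 * F d δ (q.2 - q.1) * ENNReal.ofReal (rhoF d δ (pnorm q.2))
          ≤ F d δ q.1 * (F d δ (q.2 - q.1) * K1 d δ q.2)
            + F d δ q.1 * F d δ (q.2 - q.1) := by
      intro q
      calc F d δ q.1 * F d δ (q.2 - q.1) * ENNReal.ofReal (rhoF d δ (pnorm q.2))
          ≤ F d δ q.1 * F d δ (q.2 - q.1) * (K1 d δ q.2 + 1) := mul_le_mul_right (hRK _) _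
        _ = F d δ q.1 * (F d δ (q.2 - q.1) * K1 d δ q.2)
            + F d δ q.1 * F d δ (q.2 - q.1) := by rw [mul_add, mul_one, mul_assoc]
    refine lt_of_le_of_lt (lintegral_mono step2) ?_
    rw [lintegral_add_left hmeas2]
    refine ENNReal.add_lt_top.2 ⟨?_, hFsq2⟩
    rw [Measure.volume_eq_prod, lintegral_prod _ hmeas2.aemeasurable]
    have inner_le : ∀ z : SpaceTime d,
        (∫⁻ z', F d δ z * (F d δ (z' - z) * K1 d δ z')) ≤ F d δ z * M := by
      intro z
      have hz2 : Measurable fun z' : SpaceTime d => F d δ (z' - z) * K1 d δ z' :=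
        (hFm.comp (measurable_sub_const z)).mul hKm
      rw [lintegral_const_mul _ hz2]
      refine mul_le_mul_right ?_ _
      have htr : (∫⁻ z', F d δ (z' - z) ^ ((4:ℝ)/3)) = ∫⁻ w, F d δ w ^ ((4:ℝ)/3) := by
        have h := lintegral_sub_right_eq_self (μ := volume)
          (fun w => F d δ w ^ ((4:ℝ)/3)) z
        simpa using h
      calc ∫⁻ z', F d δ (z' - z) * K1 d δ z'
          ≤ (∫⁻ z', F d δ (z' - z) ^ ((4:ℝ)/3)) ^ (1/((4:ℝ)/3))
            * (∫⁻ z', K1 d δ z' ^ (4:ℝ)) ^ (1/(4:ℝ)) :=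
            holder_step _ _ ((hFm.comp (measurable_sub_const z)).aemeasurable)
              hKm.aemeasurable
        _ = M := by rw [htr, hM]
    calc ∫⁻ z, ∫⁻ z', F d δ z * (F d δ (z' - z) * K1 d δ z')
        ≤ ∫⁻ z, F d δ z * M := lintegral_mono inner_le
      _ = (∫⁻ z, F d δ z) * M := lintegral_mul_const' M _ hMne
      _ < ⊤ := ENNReal.mul_lt_top hL1 (lt_top_iff_ne_top.2 hMne)

lemma volume_st_singleton : (volume : Measure (SpaceTime d)) {0} = 0 :=
  measure_mono_null (fun z hz => by
    rw [mem_singleton_iff] at hz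
    simp [hz]) volume_time_zero

lemma ae_ok : ∀ᵐ q : SpaceTime d × SpaceTime d, q.1 ≠ 0 ∧ q.2 ≠ 0 ∧ q.1 ≠ q.2 := by
  have h1 : (volume : Measure (SpaceTime d × SpaceTime d)) {q | q.1 = 0} = 0 := by
    have hs : {q : SpaceTime d × SpaceTime d | q.1 = 0}
        = ({0} : Set (SpaceTime d)) ×ˢ (univ : Set (SpaceTime d)) := by
      ext q
      simp only [Set.mem_setOf_eq, Set.mem_prod, Set.mem_singleton_iff, Set.mem_univ, and_true]
    rw [hs, Measure.volume_eq_prod, Measure.prod_prod, volume_st_singleton, zero_mul]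
  have h2 : (volume : Measure (SpaceTime d × SpaceTime d)) {q | q.2 = 0} = 0 := by
    have hs : {q : SpaceTime d × SpaceTime d | q.2 = 0}
        = (univ : Set (SpaceTime d)) ×ˢ ({0} : Set (SpaceTime d)) := by
      ext q
      simp only [Set.mem_setOf_eq, Set.mem_prod, Set.mem_singleton_iff, Set.mem_univ, true_and]
    rw [hs, Measure.volume_eq_prod, Measure.prod_prod, volume_st_singleton, mul_zero]
  have h3 : (volume : Measure (SpaceTime d × SpaceTime d)) {q | q.1 = q.2} = 0 := by
    have hmp := measurePreserving_prod_sub (volume : Measure (SpaceTime d)) volume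
    have hs : {q : SpaceTime d × SpaceTime d | q.1 = q.2}
        = (fun q : SpaceTime d × SpaceTime d => (q.1, q.2 - q.1)) ⁻¹'
            {p : SpaceTime d × SpaceTime d | p.2 = 0} := by
      ext q
      simp only [Set.mem_setOf_eq, Set.mem_preimage, sub_eq_zero]
      exact eq_comm
    have hnm : NullMeasurableSet {p : SpaceTime d × SpaceTime d | p.2 = 0}
        ((volume : Measure (SpaceTime d)).prod volume) :=
      (measurable_snd (measurableSet_singleton (0 : SpaceTime d))).nullMeasurableSet
    rw [hs, Measure.volume_eq_prod, hmp.measure_preimage hnm]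
    rw [← Measure.volume_eq_prod]
    exact h2
  rw [ae_iff]
  refine measure_mono_null (fun q hq => ?_)
    (measure_union_null (measure_union_null h1 h2) h3)
  simp only [Set.mem_setOf_eq, not_and_or, not_not, ne_eq] at hq
  simp only [Set.mem_union, Set.mem_setOf_eq]
  tauto

end Stmt7

theorem stmt7 (d : ℕ) (hd : d = 2 ∨ d = 3) (δ : ℝ) (hδ : δ ∈ Set.Ioo (0 : ℝ) (1 / 2)) :
    Integrable (fun q : SpaceTime d × SpaceTime d =>
      heatP d q.1 * heatP d q.2 *
        (rhoF d δ (pnorm q.1) * rhoF d δ (pnorm q.2) * rhoF d δ (pnorm (q.2 - q.1)))) ∧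
    Integrable (fun q : SpaceTime d × SpaceTime d =>
      heatP d q.1 * heatP d (q.2 - q.1) *
        (rhoF d δ (pnorm q.1) * rhoF d δ (pnorm q.2) * rhoF d δ (pnorm (q.2 - q.1)))) ∧
    ∀ κ₃ : SpaceTime d → SpaceTime d → ℝ,
      Measurable (fun q : SpaceTime d × SpaceTime d => κ₃ q.1 q.2) →
      (∀ z z' : SpaceTime d, z ≠ 0 → z' ≠ 0 → z ≠ z' →
        |κ₃ z z'| ≤ rhoF d δ (pnorm z) * rhoF d δ (pnorm z') * rhoF d δ (pnorm (z' - z))) →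
      Integrable (fun q : SpaceTime d × SpaceTime d =>
        heatP d q.1 * heatP d q.2 * κ₃ q.1 q.2) ∧
      Integrable (fun q : SpaceTime d × SpaceTime d =>
        heatP d q.1 * heatP d (q.2 - q.1) * κ₃ q.1 q.2) := by
  obtain ⟨hδ1, hδ2⟩ := hδ
  have hd2 : (2:ℝ) ≤ (d:ℝ) := by rcases hd with h | h <;> subst h <;> norm_num
  have hd3 : ((d:ℝ)) ≤ 3 := by rcases hd with h | h <;> subst h <;> norm_num
  have hJ := Stmt7.J_lt_top (d := d) (δ := δ) hδ1 hδ2 hd2 hd3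
  have hrn : ∀ z : SpaceTime d, 0 ≤ rhoF d δ (pnorm z) :=
    fun z => Stmt7.rho_nonneg (Stmt7.pnorm_nonneg z)
  have hPn : ∀ z : SpaceTime d, 0 ≤ heatP d z := Stmt7.heatP_nonneg
  have hPr : ∀ z : SpaceTime d, 0 ≤ heatP d z * rhoF d δ (pnorm z) :=
    fun z => mul_nonneg (hPn z) (hrn z)
  have hg1nn : ∀ q : SpaceTime d × SpaceTime d,
      0 ≤ heatP d q.1 * heatP d q.2 *
        (rhoF d δ (pnorm q.1) * rhoF d δ (pnorm q.2) * rhoF d δ (pnorm (q.2 - q.1))) :=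
    fun q => mul_nonneg (mul_nonneg (hPn _) (hPn _))
      (mul_nonneg (mul_nonneg (hrn _) (hrn _)) (hrn _))
  have hg2nn : ∀ q : SpaceTime d × SpaceTime d,
      0 ≤ heatP d q.1 * heatP d (q.2 - q.1) *
        (rhoF d δ (pnorm q.1) * rhoF d δ (pnorm q.2) * rhoF d δ (pnorm (q.2 - q.1))) :=
    fun q => mul_nonneg (mul_nonneg (hPn _) (hPn _))
      (mul_nonneg (mul_nonneg (hrn _) (hrn _)) (hrn _))
  have key1 : ∀ q : SpaceTime d × SpaceTime d,
      ENNReal.ofReal (heatP d q.1 * heatP d q.2 *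
        (rhoF d δ (pnorm q.1) * rhoF d δ (pnorm q.2) * rhoF d δ (pnorm (q.2 - q.1))))
      = Stmt7.F d δ q.1 * Stmt7.F d δ q.2
        * ENNReal.ofReal (rhoF d δ (pnorm (q.2 - q.1))) := by
    intro q
    rw [show heatP d q.1 * heatP d q.2 *
        (rhoF d δ (pnorm q.1) * rhoF d δ (pnorm q.2) * rhoF d δ (pnorm (q.2 - q.1)))
      = (heatP d q.1 * rhoF d δ (pnorm q.1)) * (heatP d q.2 * rhoF d δ (pnorm q.2))
          * rhoF d δ (pnorm (q.2 - q.1)) from by ring]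
    rw [ENNReal.ofReal_mul (mul_nonneg (hPr _) (hPr _)), ENNReal.ofReal_mul (hPr _)]
    rfl
  have key2 : ∀ q : SpaceTime d × SpaceTime d,
      ENNReal.ofReal (heatP d q.1 * heatP d (q.2 - q.1) *
        (rhoF d δ (pnorm q.1) * rhoF d δ (pnorm q.2) * rhoF d δ (pnorm (q.2 - q.1))))
      = Stmt7.F d δ q.1 * Stmt7.F d δ (q.2 - q.1)
        * ENNReal.ofReal (rhoF d δ (pnorm q.2)) := by
    intro q
    rw [show heatP d q.1 * heatP d (q.2 - q.1) *
        (rhoF d δ (pnorm q.1) * rhoF d δ (pnorm q.2) * rhoF d δ (pnorm (q.2 - q.1)))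
      = (heatP d q.1 * rhoF d δ (pnorm q.1))
          * (heatP d (q.2 - q.1) * rhoF d δ (pnorm (q.2 - q.1))) * rhoF d δ (pnorm q.2)
        from by ring]
    rw [ENNReal.ofReal_mul (mul_nonneg (hPr _) (hPr _)), ENNReal.ofReal_mul (hPr _)]
    rfl
  have hPm := Stmt7.measurable_heatP (d := d)
  have hrm := Stmt7.measurable_rho (d := d) (δ := δ)
  have hg1m : Measurable fun q : SpaceTime d × SpaceTime d =>
      heatP d q.1 * heatP d q.2 *
        (rhoF d δ (pnorm q.1) * rhoF d δ (pnorm q.2) * rhoF d δ (pnorm (q.2 - q.1))) :=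
    ((hPm.comp measurable_fst).mul (hPm.comp measurable_snd)).mul
      (((hrm.comp measurable_fst).mul (hrm.comp measurable_snd)).mul
        (hrm.comp (measurable_snd.sub measurable_fst)))
  have hg2m : Measurable fun q : SpaceTime d × SpaceTime d =>
      heatP d q.1 * heatP d (q.2 - q.1) *
        (rhoF d δ (pnorm q.1) * rhoF d δ (pnorm q.2) * rhoF d δ (pnorm (q.2 - q.1))) :=
    ((hPm.comp measurable_fst).mul (hPm.comp (measurable_snd.sub measurable_fst))).mul
      (((hrm.comp measurable_fst).mul (hrm.comp measurable_snd)).mul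
        (hrm.comp (measurable_snd.sub measurable_fst)))
  have hint1 : Integrable (fun q : SpaceTime d × SpaceTime d =>
      heatP d q.1 * heatP d q.2 *
        (rhoF d δ (pnorm q.1) * rhoF d δ (pnorm q.2) * rhoF d δ (pnorm (q.2 - q.1)))) := by
    refine ⟨hg1m.aestronglyMeasurable, ?_⟩
    rw [hasFiniteIntegral_iff_ofReal (Filter.Eventually.of_forall hg1nn)]
    exact lt_of_le_of_lt (le_of_eq (lintegral_congr key1)) hJ.1
  have hint2 : Integrable (fun q : SpaceTime d × SpaceTime d =>
      heatP d q.1 * heatP d (q.2 - q.1) *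
        (rhoF d δ (pnorm q.1) * rhoF d δ (pnorm q.2) * rhoF d δ (pnorm (q.2 - q.1)))) := by
    refine ⟨hg2m.aestronglyMeasurable, ?_⟩
    rw [hasFiniteIntegral_iff_ofReal (Filter.Eventually.of_forall hg2nn)]
    exact lt_of_le_of_lt (le_of_eq (lintegral_congr key2)) hJ.2
  refine ⟨hint1, hint2, ?_⟩
  intro κ₃ hκm hκb
  have hae := Stmt7.ae_ok (d := d)
  constructor
  · refine hint1.mono'
      (((hPm.comp measurable_fst).mul (hPm.comp measurable_snd)).mul
        hκm).aestronglyMeasurable ?_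
    filter_upwards [hae] with q hq
    rw [Real.norm_eq_abs, abs_mul, abs_of_nonneg (mul_nonneg (hPn q.1) (hPn q.2))]
    exact mul_le_mul_of_nonneg_left (hκb q.1 q.2 hq.1 hq.2.1 hq.2.2)
      (mul_nonneg (hPn q.1) (hPn q.2))
  · refine hint2.mono'
      (((hPm.comp measurable_fst).mul (hPm.comp (measurable_snd.sub measurable_fst))).mul
        hκm).aestronglyMeasurable ?_
    filter_upwards [hae] with q hq
    rw [Real.norm_eq_abs, abs_mul, abs_of_nonneg (mul_nonneg (hPn q.1) (hPn (q.2 - q.1)))]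
    exact mul_le_mul_of_nonneg_left (hκb q.1 q.2 hq.1 hq.2.1 hq.2.2)
      (mul_nonneg (hPn q.1) (hPn (q.2 - q.1)))
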